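/- For every n-ary rudimentary set function F there exists a formula φ of RST with Fv(φ) = {y, x₁,…,xₙ}, φ ≻_RST {y}, and F(x₁,…,xₙ) = {y | φ} (interpreted in the cumulative universe V). -/

import Mathlib

mutual
/-- Terms of the language of RST: variables and class terms `{x | φ}`. -/
inductive RTerm : Type
  | var : ℕ → RTerm
  | cls : ℕ → RFormula → RTerm

/-- Formulas of the language of RST. -/
inductive RFormula : Type
  | mem : RTerm → RTerm → RFormula
  | eq  : RTerm → RTerm → RFormula
  | not : RFormula → RFormula
  | and : RFormula → RFormula → RFormula
  | or  : RFormula → RFormula → RFormula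
  | ex  : ℕ → RFormula → RFormula
end

mutual
/-- Free variables of a term. -/
def RTerm.fv : RTerm → Finset ℕ
  | .var n => {n}
  | .cls x φ => φ.fv.erase x

/-- Free variables of a formula. -/
def RFormula.fv : RFormula → Finset ℕ
  | .mem t s => t.fv ∪ s.fv
  | .eq t s => t.fv ∪ s.fv
  | .not φ => φ.fv
  | .and φ ψ => φ.fv ∪ ψ.fv
  | .or φ ψ => φ.fv ∪ ψ.fv
  | .ex x φ => φ.fv.erase x
end

/-- The safety relation `≻_RST`. -/
inductive Safe : RFormula → Finset ℕ → Prop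
  | atom_mem (t s : RTerm) : Safe (.mem t s) ∅
  | atom_eq (t s : RTerm) : Safe (.eq t s) ∅
  | eq_left (x : ℕ) (t : RTerm) : x ∉ t.fv → Safe (.eq (.var x) t) {x}
  | eq_right (x : ℕ) (t : RTerm) : x ∉ t.fv → Safe (.eq t (.var x)) {x}
  | mem_left (x : ℕ) (t : RTerm) : x ∉ t.fv → Safe (.mem (.var x) t) {x}
  | mem_self (x : ℕ) : Safe (.mem (.var x) (.var x)) {x}
  | not (φ : RFormula) : Safe φ ∅ → Safe (.not φ) ∅
  | or (φ ψ : RFormula) (X : Finset ℕ) : Safe φ X → Safe ψ X → Safe (.or φ ψ) X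
  | and (φ ψ : RFormula) (X Y : Finset ℕ) :
      Safe φ X → Safe ψ Y → Y ∩ φ.fv = ∅ → Safe (.and φ ψ) (X ∪ Y)
  | ex (y : ℕ) (φ : RFormula) (X : Finset ℕ) :
      y ∈ X → Safe φ X → Safe (.ex y φ) (X \ {y})

mutual
/-- Well-formed terms of RST: the body of a class term must be safe for its variable. -/
inductive WFTerm : RTerm → Prop
  | var (n : ℕ) : WFTerm (.var n)
  | cls (x : ℕ) (φ : RFormula) : WFForm φ → Safe φ {x} → WFTerm (.cls x φ)

/-- Well-formed formulas of RST. -/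
inductive WFForm : RFormula → Prop
  | mem {t s : RTerm} : WFTerm t → WFTerm s → WFForm (.mem t s)
  | eq {t s : RTerm} : WFTerm t → WFTerm s → WFForm (.eq t s)
  | not {φ : RFormula} : WFForm φ → WFForm (.not φ)
  | and {φ ψ : RFormula} : WFForm φ → WFForm ψ → WFForm (.and φ ψ)
  | or {φ ψ : RFormula} : WFForm φ → WFForm ψ → WFForm (.or φ ψ)
  | ex (x : ℕ) {φ : RFormula} : WFForm φ → WFForm (.ex x φ)
end
open scoped Classical

mutual
/-- Evaluation of a term in the cumulative universe `V` (modelled by `ZFSet`);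
a class term denotes the set which has exactly the members specified by its body,
if such a set exists, and `∅` otherwise. -/
noncomputable def RTerm.eval : RTerm → (ℕ → ZFSet.{0}) → ZFSet.{0}
  | .var n, v => v n
  | .cls x φ, v =>
      if h : ∃ s : ZFSet, ∀ z : ZFSet, z ∈ s ↔ (RFormula.sat' φ (Function.update v x z)).down.down then
        h.choose
      else ∅

/-- Satisfaction of a formula in the cumulative universe `V` (wrapped in `ULift (PLift _)`
so that it lives in the same universe as `ZFSet`). -/
noncomputable def RFormula.sat' : RFormula → (ℕ → ZFSet.{0}) → ULift.{1} (PLift Prop)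
  | .mem t s, v => ⟨⟨t.eval v ∈ s.eval v⟩⟩
  | .eq t s, v => ⟨⟨t.eval v = s.eval v⟩⟩
  | .not φ, v => ⟨⟨¬ (φ.sat' v).down.down⟩⟩
  | .and φ ψ, v => ⟨⟨(φ.sat' v).down.down ∧ (ψ.sat' v).down.down⟩⟩
  | .or φ ψ, v => ⟨⟨(φ.sat' v).down.down ∨ (ψ.sat' v).down.down⟩⟩
  | .ex x φ, v => ⟨⟨∃ z : ZFSet.{0}, (φ.sat' (Function.update v x z)).down.down⟩⟩
end

/-- Satisfaction of a formula of RST in the cumulative universe `V`. -/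
noncomputable def RFormula.sat (φ : RFormula) (v : ℕ → ZFSet.{0}) : Prop := (φ.sat' v).down.down

/-- The rudimentary set functions: the smallest class of functions `(Fin n → ZFSet) → ZFSet`
containing the projections, pairing and set difference, and closed under composition and
bounded union `F(x, ȳ) = ⋃_{w ∈ x} G(w, ȳ)`. -/
inductive Rud : {n : ℕ} → ((Fin n → ZFSet.{0}) → ZFSet.{0}) → Prop
  | proj {n : ℕ} (i : Fin n) : Rud fun x => x i
  | pair : Rud (n := 2) fun x => {x 0, x 1}
  | diff : Rud (n := 2) fun x => x 0 \ x 1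
  | comp {n m : ℕ} {G : (Fin m → ZFSet.{0}) → ZFSet.{0}} {H : Fin m → (Fin n → ZFSet.{0}) → ZFSet.{0}} :
      Rud G → (∀ i, Rud (H i)) → Rud fun x => G fun i => H i x
  | bunion {n : ℕ} {G : (Fin (n+1) → ZFSet.{0}) → ZFSet.{0}} {F : (Fin (n+1) → ZFSet.{0}) → ZFSet.{0}} :
      Rud G →
      (∀ (x : Fin (n+1) → ZFSet.{0}) (z : ZFSet.{0}),
        z ∈ F x ↔ ∃ w ∈ x 0, z ∈ G (Function.update x 0 w)) →
      Rud F


/- ===================== Auxiliary development ===================== -/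

section Aux

open Function

mutual
/-- Rename all variables (free and bound) of a term. -/
def RTerm.rename (r : ℕ → ℕ) : RTerm → RTerm
  | .var n => .var (r n)
  | .cls x φ => .cls (r x) (φ.rename r)

/-- Rename all variables (free and bound) of a formula. -/
def RFormula.rename (r : ℕ → ℕ) : RFormula → RFormula
  | .mem t s => .mem (t.rename r) (s.rename r)
  | .eq t s => .eq (t.rename r) (s.rename r)
  | .not φ => .not (φ.rename r)
  | .and φ ψ => .and (φ.rename r) (ψ.rename r)
  | .or φ ψ => .or (φ.rename r) (ψ.rename r)
  | .ex x φ => .ex (r x) (φ.rename r)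
end

mutual
theorem RTerm.fv_rename (r : ℕ → ℕ) (hr : Function.Injective r) :
    ∀ t : RTerm, (t.rename r).fv = t.fv.image r
  | .var n => by simp [RTerm.rename, RTerm.fv]
  | .cls x φ => by
      simp [RTerm.rename, RTerm.fv, RFormula.fv_rename r hr φ, Finset.image_erase hr]

theorem RFormula.fv_rename (r : ℕ → ℕ) (hr : Function.Injective r) :
    ∀ φ : RFormula, (φ.rename r).fv = φ.fv.image r
  | .mem t s => by
      simp [RFormula.rename, RFormula.fv, RTerm.fv_rename r hr t, RTerm.fv_rename r hr s,
        Finset.image_union]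
  | .eq t s => by
      simp [RFormula.rename, RFormula.fv, RTerm.fv_rename r hr t, RTerm.fv_rename r hr s,
        Finset.image_union]
  | .not φ => by simp [RFormula.rename, RFormula.fv, RFormula.fv_rename r hr φ]
  | .and φ ψ => by
      simp [RFormula.rename, RFormula.fv, RFormula.fv_rename r hr φ, RFormula.fv_rename r hr ψ,
        Finset.image_union]
  | .or φ ψ => by
      simp [RFormula.rename, RFormula.fv, RFormula.fv_rename r hr φ, RFormula.fv_rename r hr ψ,
        Finset.image_union]
  | .ex x φ => by
      simp [RFormula.rename, RFormula.fv, RFormula.fv_rename r hr φ, Finset.image_erase hr]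
end

theorem Safe.rename {r : ℕ → ℕ} (hr : Function.Injective r) :
    ∀ {φ : RFormula} {X : Finset ℕ}, Safe φ X → Safe (φ.rename r) (X.image r) := by
  intro φ X h
  induction h with
  | atom_mem t s => simpa [RFormula.rename] using Safe.atom_mem (t.rename r) (s.rename r)
  | atom_eq t s => simpa [RFormula.rename] using Safe.atom_eq (t.rename r) (s.rename r)
  | eq_left x t hx =>
      simpa [RFormula.rename, RTerm.rename] using
        Safe.eq_left (r x) (t.rename r) (by simp [RTerm.fv_rename r hr, hr.eq_iff, hx])
  | eq_right x t hx =>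
      simpa [RFormula.rename, RTerm.rename] using
        Safe.eq_right (r x) (t.rename r) (by simp [RTerm.fv_rename r hr, hr.eq_iff, hx])
  | mem_left x t hx =>
      simpa [RFormula.rename, RTerm.rename] using
        Safe.mem_left (r x) (t.rename r) (by simp [RTerm.fv_rename r hr, hr.eq_iff, hx])
  | mem_self x =>
      simpa [RFormula.rename, RTerm.rename] using Safe.mem_self (r x)
  | not φ h ih => simpa [RFormula.rename] using Safe.not _ ih
  | or φ ψ X h1 h2 ih1 ih2 => exact Safe.or _ _ _ ih1 ih2
  | and φ ψ X Y h1 h2 hd ih1 ih2 =>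
      rw [Finset.image_union]
      exact Safe.and _ _ _ _ ih1 ih2
        (by rw [RFormula.fv_rename r hr, ← Finset.image_inter _ _ hr, hd]; simp)
  | ex y φ X hy h ih =>
      have := Safe.ex (r y) (φ.rename r) (X.image r) (Finset.mem_image_of_mem r hy) ih
      simpa [RFormula.rename, Finset.image_sdiff _ _ hr] using this

mutual
theorem WFTerm.rename {r : ℕ → ℕ} (hr : Function.Injective r) :
    ∀ {t : RTerm}, WFTerm t → WFTerm (t.rename r)
  | .var n, _ => WFTerm.var (r n)
  | .cls x φ, h => by
      cases h with
      | cls _ _ hφ hs =>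
        exact WFTerm.cls (r x) (φ.rename r) (WFForm.rename hr hφ)
          (by simpa using Safe.rename hr hs)

theorem WFForm.rename {r : ℕ → ℕ} (hr : Function.Injective r) :
    ∀ {φ : RFormula}, WFForm φ → WFForm (φ.rename r)
  | .mem t s, h => by
      cases h with
      | mem ht hs => exact WFForm.mem (WFTerm.rename hr ht) (WFTerm.rename hr hs)
  | .eq t s, h => by
      cases h with
      | eq ht hs => exact WFForm.eq (WFTerm.rename hr ht) (WFTerm.rename hr hs)
  | .not φ, h => by cases h with | not hφ => exact WFForm.not (WFForm.rename hr hφ)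
  | .and φ ψ, h => by
      cases h with
      | and hφ hψ => exact WFForm.and (WFForm.rename hr hφ) (WFForm.rename hr hψ)
  | .or φ ψ, h => by
      cases h with
      | or hφ hψ => exact WFForm.or (WFForm.rename hr hφ) (WFForm.rename hr hψ)
  | .ex x φ, h => by cases h with | ex _ hφ => exact WFForm.ex (r x) (WFForm.rename hr hφ)
end

/-- Congruence for evaluation of class terms. -/
theorem cls_eval_congr {x y : ℕ} {φ ψ : RFormula} {v w : ℕ → ZFSet.{0}}
    (h : ∀ z : ZFSet, (φ.sat' (Function.update v x z)).down.down ↔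
        (ψ.sat' (Function.update w y z)).down.down) :
    (RTerm.cls x φ).eval v = (RTerm.cls y ψ).eval w := by
  rw [RTerm.eval, RTerm.eval]
  by_cases h1 : ∃ s : ZFSet, ∀ z : ZFSet, z ∈ s ↔ (φ.sat' (Function.update v x z)).down.down
  · have h2 : ∃ s : ZFSet, ∀ z : ZFSet, z ∈ s ↔ (ψ.sat' (Function.update w y z)).down.down := by
      obtain ⟨s, hs⟩ := h1
      exact ⟨s, fun z => (hs z).trans (h z)⟩
    rw [dif_pos h1, dif_pos h2]
    exact ZFSet.ext fun z => ((h1.choose_spec z).trans (h z)).trans (h2.choose_spec z).symm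
  · have h2 : ¬ ∃ s : ZFSet, ∀ z : ZFSet, z ∈ s ↔ (ψ.sat' (Function.update w y z)).down.down := by
      intro ⟨s, hs⟩
      exact h1 ⟨s, fun z => (hs z).trans (h z).symm⟩
    rw [dif_neg h1, dif_neg h2]

/-- If the class defined by `φ` (with respect to `x`) is realized by the set `s`,
then the class term evaluates to `s`. -/
theorem cls_eval_eq {x : ℕ} {φ : RFormula} {v : ℕ → ZFSet.{0}} {s : ZFSet}
    (h : ∀ z : ZFSet, (φ.sat' (Function.update v x z)).down.down ↔ z ∈ s) :
    (RTerm.cls x φ).eval v = s := by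
  rw [RTerm.eval]
  have h1 : ∃ s : ZFSet, ∀ z : ZFSet, z ∈ s ↔ (φ.sat' (Function.update v x z)).down.down :=
    ⟨s, fun z => (h z).symm⟩
  rw [dif_pos h1]
  exact ZFSet.ext fun z => (h1.choose_spec z).trans (h z)

mutual
theorem RTerm.eval_agree : ∀ (t : RTerm) (v w : ℕ → ZFSet.{0}),
    (∀ m ∈ t.fv, v m = w m) → t.eval v = t.eval w
  | .var n, v, w, h => by simpa [RTerm.eval] using h n (by simp [RTerm.fv])
  | .cls x φ, v, w, h => by
      refine cls_eval_congr fun z => ?_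
      refine RFormula.sat_agree φ _ _ fun m hm => ?_
      by_cases hx : m = x
      · subst hx; simp
      · have := h m (by simp [RTerm.fv, Finset.mem_erase, hx, hm])
        simp [Function.update_of_ne hx, this]

theorem RFormula.sat_agree : ∀ (φ : RFormula) (v w : ℕ → ZFSet.{0}),
    (∀ m ∈ φ.fv, v m = w m) → ((φ.sat' v).down.down ↔ (φ.sat' w).down.down)
  | .mem t s, v, w, h => by
      rw [RFormula.sat', RFormula.sat',
        RTerm.eval_agree t v w fun m hm => h m (by simp [RFormula.fv, hm]),
        RTerm.eval_agree s v w fun m hm => h m (by simp [RFormula.fv, hm])]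
  | .eq t s, v, w, h => by
      rw [RFormula.sat', RFormula.sat',
        RTerm.eval_agree t v w fun m hm => h m (by simp [RFormula.fv, hm]),
        RTerm.eval_agree s v w fun m hm => h m (by simp [RFormula.fv, hm])]
  | .not φ, v, w, h => by
      rw [RFormula.sat', RFormula.sat']
      exact not_congr (RFormula.sat_agree φ v w h)
  | .and φ ψ, v, w, h => by
      rw [RFormula.sat', RFormula.sat']
      exact and_congr
        (RFormula.sat_agree φ v w fun m hm => h m (by simp [RFormula.fv, hm]))
        (RFormula.sat_agree ψ v w fun m hm => h m (by simp [RFormula.fv, hm]))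
  | .or φ ψ, v, w, h => by
      rw [RFormula.sat', RFormula.sat']
      exact or_congr
        (RFormula.sat_agree φ v w fun m hm => h m (by simp [RFormula.fv, hm]))
        (RFormula.sat_agree ψ v w fun m hm => h m (by simp [RFormula.fv, hm]))
  | .ex x φ, v, w, h => by
      rw [RFormula.sat', RFormula.sat']
      refine exists_congr fun z => RFormula.sat_agree φ _ _ fun m hm => ?_
      by_cases hx : m = x
      · subst hx; simp
      · have := h m (by simp [RFormula.fv, Finset.mem_erase, hx, hm])
        simp [Function.update_of_ne hx, this]
end

mutual
theorem RTerm.eval_rename {r : ℕ → ℕ} (hr : Function.Injective r) :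
    ∀ (t : RTerm) (v : ℕ → ZFSet.{0}), (t.rename r).eval v = t.eval (v ∘ r)
  | .var n, v => by simp [RTerm.rename, RTerm.eval, Function.comp]
  | .cls x φ, v => by
      rw [RTerm.rename]
      refine cls_eval_congr fun z => ?_
      rw [RFormula.sat_rename hr φ (Function.update v (r x) z),
        Function.update_comp_eq_of_injective v hr x z]

theorem RFormula.sat_rename {r : ℕ → ℕ} (hr : Function.Injective r) :
    ∀ (φ : RFormula) (v : ℕ → ZFSet.{0}),
      ((φ.rename r).sat' v).down.down ↔ (φ.sat' (v ∘ r)).down.down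
  | .mem t s, v => by
      rw [RFormula.rename, RFormula.sat', RFormula.sat',
        RTerm.eval_rename hr t v, RTerm.eval_rename hr s v]
  | .eq t s, v => by
      rw [RFormula.rename, RFormula.sat', RFormula.sat',
        RTerm.eval_rename hr t v, RTerm.eval_rename hr s v]
  | .not φ, v => by
      rw [RFormula.rename, RFormula.sat', RFormula.sat']
      exact not_congr (RFormula.sat_rename hr φ v)
  | .and φ ψ, v => by
      rw [RFormula.rename, RFormula.sat', RFormula.sat']
      exact and_congr (RFormula.sat_rename hr φ v) (RFormula.sat_rename hr ψ v)
  | .or φ ψ, v => by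
      rw [RFormula.rename, RFormula.sat', RFormula.sat']
      exact or_congr (RFormula.sat_rename hr φ v) (RFormula.sat_rename hr ψ v)
  | .ex x φ, v => by
      rw [RFormula.rename, RFormula.sat', RFormula.sat']
      refine exists_congr fun z => ?_
      rw [RFormula.sat_rename hr φ (Function.update v (r x) z),
        Function.update_comp_eq_of_injective v hr x z]
end

end Aux

section Aux2

/-- Padding formula with free variables `0, …, k`, always true. -/
def pad : ℕ → RFormula
  | 0 => .eq (.var 0) (.var 0)
  | k+1 => .and (pad k) (.eq (.var (k+1)) (.var (k+1)))

theorem pad_fv : ∀ k, (pad k).fv = Finset.range (k+1)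
  | 0 => by simp [pad, RFormula.fv, RTerm.fv]
  | k+1 => by
      ext p
      simp [pad, RFormula.fv, RTerm.fv, pad_fv k, Finset.mem_range]
      omega

theorem pad_wf : ∀ k, WFForm (pad k)
  | 0 => WFForm.eq (.var 0) (.var 0)
  | k+1 => WFForm.and (pad_wf k) (WFForm.eq (.var _) (.var _))

theorem pad_safe : ∀ k, Safe (pad k) ∅
  | 0 => Safe.atom_eq _ _
  | k+1 => by
      have := Safe.and (pad k) (.eq (.var (k+1)) (.var (k+1))) ∅ ∅
        (pad_safe k) (Safe.atom_eq _ _) (by simp)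
      simpa [pad] using this

theorem pad_sat : ∀ k (v : ℕ → ZFSet.{0}), ((pad k).sat' v).down.down
  | 0, v => by simp [pad, RFormula.sat']
  | k+1, v => by
      rw [pad, RFormula.sat']
      exact ⟨pad_sat k v, by simp [RFormula.sat']⟩

/-- The body of the formula for composition: a chain
`∃ u_{k-1} (u_{k-1} = t_{k-1} ∧ ⋯ ∃ u_0 (u_0 = t_0 ∧ base))` with `u_j = n+1+j`. -/
def compBody (n : ℕ) (t : ℕ → RTerm) (base : RFormula) : ℕ → RFormula
  | 0 => base
  | k+1 => .ex (n+1+k) (.and (.eq (.var (n+1+k)) (t k)) (compBody n t base k))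

theorem compBody_safe {n : ℕ} {t : ℕ → RTerm} {base : RFormula}
    (ht : ∀ k, ∀ p ∈ (t k).fv, p < n) (hb : Safe base {n}) :
    ∀ k, Safe (compBody n t base k) {n}
  | 0 => hb
  | k+1 => by
      have h1 : Safe (.eq (.var (n+1+k)) (t k)) {n+1+k} :=
        Safe.eq_left _ _ (fun hmem => by have := ht k _ hmem; omega)
      have hdis : ({n} : Finset ℕ) ∩ (RFormula.eq (.var (n+1+k)) (t k)).fv = ∅ := by
        ext p
        simp only [Finset.mem_inter, Finset.mem_singleton, RFormula.fv, RTerm.fv,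
          Finset.mem_union, Finset.notMem_empty, iff_false, not_and]
        rintro rfl h
        rcases h with h | h
        · omega
        · exact absurd (ht k _ h) (by omega)
      have h2 := Safe.and _ _ {n+1+k} {n} h1 (compBody_safe ht hb k) hdis
      have h3 := Safe.ex (n+1+k) _ _ (by simp) h2
      have h4 : (({n+1+k} ∪ {n} : Finset ℕ)) \ {n+1+k} = {n} := by
        ext p; simp; omega
      rw [h4] at h3
      exact h3

theorem compBody_wf {n : ℕ} {t : ℕ → RTerm} {base : RFormula}
    (ht : ∀ k, WFTerm (t k)) (hb : WFForm base) :
    ∀ k, WFForm (compBody n t base k)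
  | 0 => hb
  | k+1 => WFForm.ex _ (WFForm.and (WFForm.eq (.var _) (ht k)) (compBody_wf ht hb k))

theorem compBody_fv {n : ℕ} {t : ℕ → RTerm} {base : RFormula}
    (ht : ∀ k, ∀ p ∈ (t k).fv, p < n) :
    ∀ k, ∀ p ∈ (compBody n t base k).fv, (p ∈ base.fv ∨ p < n) ∧ ∀ j < k, p ≠ n+1+j
  | 0, p, hp => ⟨Or.inl hp, by omega⟩
  | k+1, p, hp => by
      rw [compBody] at hp
      simp only [RFormula.fv, RTerm.fv, Finset.mem_erase, Finset.mem_union,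
        Finset.mem_singleton] at hp
      obtain ⟨hne, h⟩ := hp
      rcases h with (h | h) | h
      · exact absurd h hne
      · exact ⟨Or.inr (ht k p h), fun j _ => by have := ht k p h; omega⟩
      · obtain ⟨h1, h2⟩ := compBody_fv ht k p h
        exact ⟨h1, fun j hj => by rcases Nat.lt_succ_iff_lt_or_eq.mp hj with hj | hj
                                  · exact h2 j hj
                                  · subst hj; exact hne⟩

/-- The valuation that the chain of existentials effectively produces. -/
noncomputable def compVal (n : ℕ) (t : ℕ → RTerm) (k : ℕ) (v : ℕ → ZFSet.{0}) : ℕ → ZFSet.{0} :=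
  fun p => if n+1 ≤ p ∧ p < n+1+k then (t (p-(n+1))).eval v else v p

theorem compBody_sat {n : ℕ} {t : ℕ → RTerm} {base : RFormula}
    (ht : ∀ k, ∀ p ∈ (t k).fv, p < n) :
    ∀ k (v : ℕ → ZFSet.{0}),
      ((compBody n t base k).sat' v).down.down ↔ (base.sat' (compVal n t k v)).down.down
  | 0, v => by
      have h : compVal n t 0 v = v := funext fun p => by
        simp only [compVal]
        rw [if_neg (by omega)]
      rw [compBody, h]
  | k+1, v => by
      rw [compBody, RFormula.sat']
      set u := n+1+k with hu
      have hev : ∀ (j : ℕ) (c : ZFSet), (t j).eval (Function.update v u c) = (t j).eval v :=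
        fun j c => RTerm.eval_agree _ _ _ fun p hp =>
          Function.update_of_ne (by have := ht j p hp; omega) _ _
      have step : ∀ z : ZFSet,
          ((RFormula.and (.eq (.var u) (t k)) (compBody n t base k)).sat'
            (Function.update v u z)).down.down ↔
          z = (t k).eval v ∧
            ((compBody n t base k).sat' (Function.update v u z)).down.down := by
        intro z
        rw [RFormula.sat', RFormula.sat']
        simp only [RTerm.eval, Function.update_self, hev]
      simp only [step]
      rw [exists_eq_left]
      set c := (t k).eval v with hc
      rw [compBody_sat ht k (Function.update v u c)]
      have hval : compVal n t k (Function.update v u c) = compVal n t (k+1) v := by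
        funext p
        by_cases h1 : n+1 ≤ p ∧ p < n+1+k
        · simp only [compVal, if_pos h1, if_pos (show n+1 ≤ p ∧ p < n+1+(k+1) by omega), hev]
        · by_cases h2 : p = u
          · subst h2
            simp only [compVal, if_neg h1, Function.update_self,
              if_pos (show n+1 ≤ u ∧ u < n+1+(k+1) by omega)]
            have huk : u - (n+1) = k := by omega
            rw [huk, hc]
          · simp only [compVal, if_neg h1, if_neg (show ¬(n+1 ≤ p ∧ p < n+1+(k+1)) by omega),
              Function.update_of_ne h2]
      rw [hval]

end Aux2

section Main

/-- A closed dummy term. -/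
def dummyTerm : RTerm := .cls 0 (.mem (.var 0) (.var 0))

theorem dummyTerm_fv : dummyTerm.fv = ∅ := by
  simp [dummyTerm, RTerm.fv, RFormula.fv]

theorem dummyTerm_wf : WFTerm dummyTerm :=
  WFTerm.cls 0 _ (WFForm.mem (.var 0) (.var 0)) (Safe.mem_self 0)

/-- The renaming used for the outer formula in the composition case. -/
def compRen (n m : ℕ) : ℕ → ℕ := fun k => if k = m then n else n+1+k

theorem compRen_inj (n m : ℕ) : Function.Injective (compRen n m) := by
  intro a b h
  simp only [compRen] at h
  split_ifs at h <;> omega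

/-- The renaming (a transposition) used in the bounded-union case. -/
def swapRen (a : ℕ) : ℕ → ℕ := fun k => if k = 0 then a else if k = a then 0 else k

theorem swapRen_inj (a : ℕ) : Function.Injective (swapRen a) := by
  intro x y h
  simp only [swapRen] at h
  split_ifs at h <;> omega

theorem rud_good {n : ℕ} {F : (Fin n → ZFSet.{0}) → ZFSet.{0}} (hF : Rud F) :
    ∃ φ : RFormula, WFForm φ ∧ φ.fv ⊆ Finset.range (n+1) ∧ Safe φ {n} ∧
      ∀ (x : Fin n → ZFSet.{0}) (v : ℕ → ZFSet.{0}), (∀ i : Fin n, v i = x i) →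
        ((φ.sat' v).down.down ↔ v n ∈ F x) := by
  induction hF with
  | @proj n i =>
      refine ⟨.mem (.var n) (.var i), WFForm.mem (.var n) (.var i), ?_, ?_, ?_⟩
      · intro p hp
        simp only [RFormula.fv, RTerm.fv, Finset.mem_union, Finset.mem_singleton] at hp
        have := i.isLt
        simp only [Finset.mem_range]
        omega
      · exact Safe.mem_left n (.var i) (by simp [RTerm.fv]; have := i.isLt; omega)
      · intro x v hv
        rw [RFormula.sat']
        simp only [RTerm.eval]
        rw [hv i]
  | pair =>
      refine ⟨.or (.eq (.var 2) (.var 0)) (.eq (.var 2) (.var 1)),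
        WFForm.or (WFForm.eq (.var 2) (.var 0)) (WFForm.eq (.var 2) (.var 1)), ?_, ?_, ?_⟩
      · intro p hp
        simp only [RFormula.fv, RTerm.fv, Finset.mem_union, Finset.mem_singleton] at hp
        simp only [Finset.mem_range]
        omega
      · exact Safe.or _ _ {2} (Safe.eq_left 2 (.var 0) (by simp [RTerm.fv]))
          (Safe.eq_left 2 (.var 1) (by simp [RTerm.fv]))
      · intro x v hv
        have h0 : v 0 = x 0 := by simpa using hv 0
        have h1 : v 1 = x 1 := by simpa using hv 1
        rw [RFormula.sat', RFormula.sat', RFormula.sat']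
        simp only [RTerm.eval]
        rw [ZFSet.mem_pair, h0, h1]
  | diff =>
      refine ⟨.and (.mem (.var 2) (.var 0)) (.not (.mem (.var 2) (.var 1))),
        WFForm.and (WFForm.mem (.var 2) (.var 0))
          (WFForm.not (WFForm.mem (.var 2) (.var 1))), ?_, ?_, ?_⟩
      · intro p hp
        simp only [RFormula.fv, RTerm.fv, Finset.mem_union, Finset.mem_singleton] at hp
        simp only [Finset.mem_range]
        omega
      · have := Safe.and (.mem (.var 2) (.var 0)) (.not (.mem (.var 2) (.var 1))) {2} ∅
          (Safe.mem_left 2 (.var 0) (by simp [RTerm.fv]))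
          (Safe.not _ (Safe.atom_mem _ _)) (by simp)
        simpa using this
      · intro x v hv
        have h0 : v 0 = x 0 := by simpa using hv 0
        have h1 : v 1 = x 1 := by simpa using hv 1
        simp only [RFormula.sat', RTerm.eval]
        rw [ZFSet.mem_sdiff, h0, h1]
  | @comp n m G H hG hH ihG ihH =>
      obtain ⟨φG, hGwf, hGfv, hGsafe, hGsat⟩ := ihG
      choose φH hHwf hHfv hHsafe hHsat using ihH
      set rG := compRen n m with hrGdef
      have hrG := compRen_inj n m
      set t : ℕ → RTerm := fun j =>
        if h : j < m then RTerm.cls n (φH ⟨j, h⟩) else dummyTerm with htdef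
      have ht : ∀ k, ∀ p ∈ (t k).fv, p < n := by
        intro k p hp
        simp only [htdef] at hp
        by_cases h : k < m
        · rw [dif_pos h] at hp
          simp only [RTerm.fv, Finset.mem_erase] at hp
          have := hHfv ⟨k, h⟩ hp.2
          simp only [Finset.mem_range] at this
          omega
        · rw [dif_neg h, dummyTerm_fv] at hp
          exact absurd hp (Finset.notMem_empty p)
      have htwf : ∀ k, WFTerm (t k) := by
        intro k
        simp only [htdef]
        by_cases h : k < m
        · rw [dif_pos h]
          exact WFTerm.cls n _ (hHwf ⟨k, h⟩) (hHsafe ⟨k, h⟩)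
        · rw [dif_neg h]
          exact dummyTerm_wf
      set base := RFormula.rename rG φG with hbase
      have hbasefv : ∀ p ∈ base.fv, p = n ∨ ∃ q < m, p = n+1+q := by
        intro p hp
        rw [hbase, RFormula.fv_rename rG hrG] at hp
        obtain ⟨q, hq, rfl⟩ := Finset.mem_image.mp hp
        have := hGfv hq
        simp only [Finset.mem_range] at this
        rw [hrGdef]
        simp only [compRen]
        by_cases h : q = m
        · left; rw [if_pos h]
        · right; exact ⟨q, by omega, by rw [if_neg h]⟩
      have hbasesafe : Safe base {n} := by
        have := Safe.rename hrG hGsafe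
        rw [← hbase] at this
        simpa [hrGdef, compRen] using this
      refine ⟨compBody n t base m, compBody_wf htwf (WFForm.rename hrG hGwf) m, ?_,
        compBody_safe ht hbasesafe m, ?_⟩
      · intro p hp
        obtain ⟨h1, h2⟩ := compBody_fv ht m p hp
        simp only [Finset.mem_range]
        rcases h1 with h1 | h1
        · rcases hbasefv p h1 with h | ⟨q, hq, rfl⟩
          · omega
          · exact absurd rfl (h2 q hq)
        · omega
      · intro x v hv
        rw [compBody_sat ht m v, RFormula.sat_rename hrG φG]
        set x' : Fin m → ZFSet.{0} := fun i => H i x with hx'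
        have key : ∀ i : Fin m, (compVal n t m v ∘ rG) i = x' i := by
          intro i
          have hiv : rG i = n+1+i := by
            rw [hrGdef]; simp only [compRen]; rw [if_neg (by have := i.isLt; omega)]
          have hrange : n+1 ≤ n+1+(i:ℕ) ∧ n+1+(i:ℕ) < n+1+m := by have := i.isLt; omega
          have hsub : n+1+(i:ℕ) - (n+1) = (i:ℕ) := by omega
          have : (compVal n t m v ∘ rG) i = (t i).eval v := by
            simp only [Function.comp, hiv, compVal, if_pos hrange, hsub]
          rw [this]
          simp only [htdef]
          rw [dif_pos i.isLt]
          simp only [hx']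
          refine cls_eval_eq fun z => ?_
          have := hHsat ⟨(i:ℕ), i.isLt⟩ x (Function.update v n z) ?_
          · rw [Function.update_self] at this
            simpa using this
          · intro j
            rw [Function.update_of_ne (by have := j.isLt; omega)]
            exact hv j
        have hm : (compVal n t m v ∘ rG) m = v n := by
          have : rG m = n := by rw [hrGdef]; simp [compRen]
          simp only [Function.comp, this, compVal]
          rw [if_neg (by omega)]
        have := hGsat x' (compVal n t m v ∘ rG) key
        rw [hm] at this
        exact this
  | @bunion n G F hG hFx ihG =>
      obtain ⟨φG, hGwf, hGfv, hGsafe, hGsat⟩ := ihG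
      have hr := swapRen_inj (n+2)
      refine ⟨.ex (n+2) (.and (.mem (.var (n+2)) (.var 0)) (RFormula.rename (swapRen (n+2)) φG)),
        WFForm.ex _ (WFForm.and (WFForm.mem (.var _) (.var 0))
          (WFForm.rename hr hGwf)), ?_, ?_, ?_⟩
      · intro p hp
        simp only [RFormula.fv, RTerm.fv, Finset.mem_erase, Finset.mem_union,
          Finset.mem_singleton, RFormula.fv_rename _ hr] at hp
        obtain ⟨hne, h⟩ := hp
        simp only [Finset.mem_range]
        rcases h with (h | h) | h
        · omega
        · omega
        · obtain ⟨q, hq, rfl⟩ := Finset.mem_image.mp h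
          have hq2 := hGfv hq
          simp only [Finset.mem_range] at hq2
          simp only [swapRen] at hne ⊢
          split_ifs at hne ⊢ with hc1 hc2 <;> omega
      · have h1 : Safe (.mem (.var (n+2)) (.var 0)) {n+2} :=
          Safe.mem_left _ (.var 0) (by simp [RTerm.fv])
        have h2 : Safe (RFormula.rename (swapRen (n+2)) φG) {n+1} := by
          have := Safe.rename hr hGsafe
          have hr1 : swapRen (n+2) (n+1) = n+1 := by
            simp only [swapRen]; rw [if_neg (by omega), if_neg (by omega)]
          simpa [hr1] using this
        have hdis : ({n+1} : Finset ℕ) ∩ (RFormula.mem (.var (n+2)) (.var 0)).fv = ∅ := by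
          ext p; simp [RFormula.fv, RTerm.fv]
        have h3 := Safe.and _ _ {n+2} {n+1} h1 h2 hdis
        have h4 := Safe.ex (n+2) _ _ (by simp) h3
        have h5 : (({n+2} ∪ {n+1} : Finset ℕ)) \ {n+2} = {n+1} := by ext p; simp; omega
        rw [h5] at h4
        exact h4
      · intro x v hv
        have h0 : v 0 = x 0 := by simpa using hv 0
        rw [RFormula.sat']
        have step : ∀ z : ZFSet.{0},
            ((RFormula.and (.mem (.var (n+2)) (.var 0)) (RFormula.rename (swapRen (n+2)) φG)).sat'
              (Function.update v (n+2) z)).down.down ↔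
            z ∈ x 0 ∧ v (n+1) ∈ G (Function.update x 0 z) := by
          intro z
          rw [RFormula.sat', RFormula.sat']
          simp only [RTerm.eval, Function.update_self]
          rw [Function.update_of_ne (by omega : (0:ℕ) ≠ n+2), h0]
          refine and_congr Iff.rfl ?_
          rw [RFormula.sat_rename hr φG]
          have hvals : ∀ i : Fin (n+1),
              (Function.update v (n+2) z ∘ swapRen (n+2)) i = Function.update x 0 z i := by
            intro i
            rcases Nat.eq_zero_or_pos (i : ℕ) with hi | hi
            · have hi0 : i = 0 := Fin.ext (by simpa using hi)
              have h1 : (Function.update v (n+2) z ∘ swapRen (n+2)) ((i : ℕ))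
                  = Function.update v (n+2) z (swapRen (n+2) (i:ℕ)) := rfl
              have h2 : swapRen (n+2) (i:ℕ) = n+2 := by
                simp only [swapRen]; rw [if_pos hi]
              rw [h1, h2, Function.update_self, hi0, Function.update_self]
            · have hi0 : i ≠ (0 : Fin (n+1)) := by
                intro h; rw [h] at hi; simp at hi
              have h2 : swapRen (n+2) (i:ℕ) = (i:ℕ) := by
                simp only [swapRen]
                rw [if_neg (by omega), if_neg (by have := i.isLt; omega)]
              have h1 : (Function.update v (n+2) z ∘ swapRen (n+2)) ((i : ℕ))
                  = Function.update v (n+2) z (swapRen (n+2) (i:ℕ)) := rfl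
              rw [h1, h2, Function.update_of_ne (by have := i.isLt; omega),
                Function.update_of_ne hi0]
              exact hv i
          have key := hGsat (Function.update x 0 z) _ hvals
          have hvn : (Function.update v (n+2) z ∘ swapRen (n+2)) (n+1) = v (n+1) := by
            have h2 : swapRen (n+2) (n+1) = n+1 := by
              simp only [swapRen]; rw [if_neg (by omega), if_neg (by omega)]
            show Function.update v (n+2) z (swapRen (n+2) (n+1)) = v (n+1)
            rw [h2, Function.update_of_ne (by omega)]
          rw [hvn] at key
          exact key
        simp only [step]
        rw [hFx x (v (n+1))]

end Main

/-- For every `n`-ary rudimentary function `F` there is a formula `φ` of RST with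
`Fv(φ) = {y, x₁, …, xₙ}` (the variables `n, 0, …, n-1`), `φ ≻_RST {y}`, and
`F(x₁,…,xₙ) = {y ∣ φ}` in the cumulative universe. -/
theorem rud_to_formula (n : ℕ) (F : (Fin n → ZFSet.{0}) → ZFSet.{0}) (hF : Rud F) :
    ∃ φ : RFormula, WFForm φ ∧ φ.fv = Finset.range (n + 1) ∧ Safe φ {n} ∧
      ∀ (x : Fin n → ZFSet.{0}) (z : ZFSet.{0}),
        z ∈ F x ↔ φ.sat fun m => if h : m < n then x ⟨m, h⟩ else z := by
  obtain ⟨φ₀, hwf, hfv, hsafe, hsat⟩ := rud_good hF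
  refine ⟨.and φ₀ (pad n), WFForm.and hwf (pad_wf n), ?_, ?_, ?_⟩
  · simp only [RFormula.fv, pad_fv]
    exact Finset.union_eq_right.mpr hfv
  · have := Safe.and φ₀ (pad n) {n} ∅ hsafe (pad_safe n) (by simp)
    simpa using this
  · intro x z
    rw [RFormula.sat, RFormula.sat']
    have hv : ∀ i : Fin n, (fun m => if h : m < n then x ⟨m, h⟩ else z) i = x i := by
      intro i; exact dif_pos i.isLt
    have hmain := hsat x (fun m => if h : m < n then x ⟨m, h⟩ else z) hv
    have hz : (fun m => if h : m < n then x ⟨m, h⟩ else z) n = z := dif_neg (lt_irrefl n)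
    rw [dif_neg (lt_irrefl n)] at hmain
    exact ⟨fun h => ⟨hmain.mpr h, pad_sat n _⟩, fun h => hmain.mp h.1⟩
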